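/- Dirichlet eigenvalue comparison for a sign region: Suppose φ : V → ℝ satisfies (λ − W(u)) q(u) φ(u) = Σ_v w(u,v)[φ(u) − φ(v)] with w ≥ 0, q > 0, and let S' ⊆ V be such that φ is nonnegative on S' and nonpositive on V∖S' (or vice versa), with Σ_{u∈S'} q(u)φ(u)² > 0. Then λ ≥ λ₀^D(S') + [Σ_{u∈S'} W(u)q(u)φ(u)²]/[Σ_{u∈S'} q(u)φ(u)²], where λ₀^D(S') = inf over f : V → ℝ vanishing outside S', f not identically zero, of [Σ_{{u,v}} w(u,v)(f(u)−f(v))²]/[Σ_{u∈S'} q(u) f(u)²]. -/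
import Mathlib


theorem statement11 {V : Type*} [Fintype V] [DecidableEq V]
    (w : V → V → ℝ) (hw : ∀ u v, w u v = w v u) (hwpos : ∀ u v, 0 ≤ w u v)
    (q : V → ℝ) (hq : ∀ u, 0 < q u) (W : V → ℝ) (lam : ℝ) (φ : V → ℝ)
    (heig : ∀ u, (lam - W u) * q u * φ u = ∑ v, w u v * (φ u - φ v))
    (S' : Finset V)
    (hsign : (∀ u ∈ S', 0 ≤ φ u) ∧ (∀ u ∈ S'ᶜ, φ u ≤ 0) ∨
             (∀ u ∈ S', φ u ≤ 0) ∧ (∀ u ∈ S'ᶜ, 0 ≤ φ u))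
    (hpos : 0 < ∑ u ∈ S', q u * φ u ^2)
    (lamD : ℝ)
    (hlamD : lamD = sInf {r : ℝ | ∃ f : V → ℝ, (∀ u ∉ S', f u = 0) ∧ f ≠ 0 ∧
      r = ((1/2) * ∑ u, ∑ v, w u v * (f u - f v)^2) / (∑ u ∈ S', q u * f u ^2)}) :
    lamD + (∑ u ∈ S', W u * q u * φ u ^2) / (∑ u ∈ S', q u * φ u ^2) ≤ lam := by
  classical
  set A := ∑ u ∈ S', q u * φ u ^2 with hA
  set B := ∑ u ∈ S', W u * q u * φ u ^2 with hB
  set g : V → ℝ := fun u => if u ∈ S' then φ u else 0 with hg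
  have hgS : ∀ u ∈ S', g u = φ u := fun u hu => by simp [hg, hu]
  have hgC : ∀ u ∉ S', g u = 0 := fun u hu => by simp [hg, hu]
  have hden : ∑ u ∈ S', q u * g u ^2 = A :=
    Finset.sum_congr rfl (fun u hu => by rw [hgS u hu])
  have hgne : g ≠ 0 := by
    intro h
    rw [h] at hden
    simp at hden
    linarith
  -- quadratic form identity
  have hQ : ∑ u, ∑ v, w u v * (g u * (g u - g v)) =
      (1/2) * ∑ u, ∑ v, w u v * (g u - g v)^2 := by
    have hswap : ∑ u, ∑ v, w u v * (g u * (g u - g v)) =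
        ∑ u, ∑ v, w u v * (-(g v) * (g u - g v)) := by
      rw [Finset.sum_comm]
      exact Finset.sum_congr rfl fun u _ => Finset.sum_congr rfl fun v _ => by
        rw [hw]; ring
    have hadd : ∑ u, ∑ v, w u v * (g u * (g u - g v)) +
        ∑ u, ∑ v, w u v * (-(g v) * (g u - g v)) =
        ∑ u, ∑ v, w u v * (g u - g v)^2 := by
      rw [← Finset.sum_add_distrib]
      refine Finset.sum_congr rfl fun u _ => ?_
      rw [← Finset.sum_add_distrib]
      exact Finset.sum_congr rfl fun v _ => by ring
    linarith [hadd, hswap]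
  -- restrict to S'
  have hQd : ∑ u, ∑ v, w u v * (g u * (g u - g v)) =
      ∑ u ∈ S', ∑ v, w u v * (φ u * (φ u - g v)) := by
    rw [← Finset.sum_subset (Finset.subset_univ S')
      (fun u _ hu => by simp [hgC u hu])]
    exact Finset.sum_congr rfl fun u hu => Finset.sum_congr rfl fun v _ => by
      rw [hgS u hu]
  -- eigenvalue equation summed
  have hT : ∑ u ∈ S', ∑ v, w u v * (φ u * (φ u - φ v)) = lam * A - B := by
    have key : ∀ u ∈ S', ∑ v, w u v * (φ u * (φ u - φ v)) =
        (lam - W u) * q u * φ u ^2 := by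
      intro u _
      calc ∑ v, w u v * (φ u * (φ u - φ v))
          = φ u * ∑ v, w u v * (φ u - φ v) := by
            rw [Finset.mul_sum]; exact Finset.sum_congr rfl fun v _ => by ring
        _ = φ u * ((lam - W u) * q u * φ u) := by rw [← heig u]
        _ = (lam - W u) * q u * φ u ^2 := by ring
    rw [Finset.sum_congr rfl key, hA, hB, Finset.mul_sum, ← Finset.sum_sub_distrib]
    exact Finset.sum_congr rfl fun u _ => by ring
  -- difference between full and restricted forms
  have hdiff : ∀ u ∈ S', ∑ v, w u v * (φ u * (φ u - φ v)) -
      ∑ v, w u v * (φ u * (φ u - g v)) =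
      ∑ v ∈ S'ᶜ, w u v * (φ u * (- φ v)) := by
    intro u _
    rw [← Finset.sum_sub_distrib,
        ← Finset.sum_subset (Finset.subset_univ S'ᶜ)
          (fun v _ hv => by
            have hv' : v ∈ S' := by simpa using hv
            rw [hgS v hv']; ring)]
    exact Finset.sum_congr rfl fun v hv => by
      rw [hgC v (Finset.mem_compl.mp hv)]; ring
  -- the cross term is nonnegative
  have hsgn : 0 ≤ ∑ u ∈ S', ∑ v ∈ S'ᶜ, w u v * (φ u * (- φ v)) := by
    refine Finset.sum_nonneg fun u hu => Finset.sum_nonneg fun v hv => ?_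
    rcases hsign with ⟨h1, h2⟩ | ⟨h1, h2⟩
    · exact mul_nonneg (hwpos u v)
        (mul_nonneg (h1 u hu) (by linarith [h2 v hv]))
    · refine mul_nonneg (hwpos u v) ?_
      nlinarith [mul_nonneg (neg_nonneg.2 (h1 u hu)) (h2 v hv)]
  -- main estimate on the quadratic form
  have hQle : (1/2) * ∑ u, ∑ v, w u v * (g u - g v)^2 ≤ lam * A - B := by
    rw [← hQ, hQd]
    have h1 : ∑ u ∈ S', ∑ v, w u v * (φ u * (φ u - g v)) =
        ∑ u ∈ S', ∑ v, w u v * (φ u * (φ u - φ v)) -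
        ∑ u ∈ S', ∑ v ∈ S'ᶜ, w u v * (φ u * (- φ v)) := by
      rw [← Finset.sum_sub_distrib]
      exact Finset.sum_congr rfl fun u hu => by linarith [hdiff u hu]
    rw [h1, hT]
    linarith [hsgn]
  -- membership of the Rayleigh quotient of g
  have hmem : ((1/2) * ∑ u, ∑ v, w u v * (g u - g v)^2) / A ∈
      {r : ℝ | ∃ f : V → ℝ, (∀ u ∉ S', f u = 0) ∧ f ≠ 0 ∧
        r = ((1/2) * ∑ u, ∑ v, w u v * (f u - f v)^2) / (∑ u ∈ S', q u * f u ^2)} :=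
    ⟨g, hgC, hgne, by rw [hden]⟩
  have hbdd : BddBelow {r : ℝ | ∃ f : V → ℝ, (∀ u ∉ S', f u = 0) ∧ f ≠ 0 ∧
      r = ((1/2) * ∑ u, ∑ v, w u v * (f u - f v)^2) / (∑ u ∈ S', q u * f u ^2)} := by
    refine ⟨0, fun r hr => ?_⟩
    obtain ⟨h, -, -, rfl⟩ := hr
    apply div_nonneg
    · refine mul_nonneg (by norm_num) ?_
      exact Finset.sum_nonneg fun u _ => Finset.sum_nonneg fun v _ =>
        mul_nonneg (hwpos u v) (sq_nonneg _)
    · exact Finset.sum_nonneg fun u _ => mul_nonneg (hq u).le (sq_nonneg _)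
  have hinf := csInf_le hbdd hmem
  have hr0 : ((1/2) * ∑ u, ∑ v, w u v * (g u - g v)^2) / A ≤ lam - B / A := by
    rw [div_le_iff₀ hpos]
    have hAB : (lam - B / A) * A = lam * A - B := by field_simp
    rw [hAB]; exact hQle
  rw [hlamD]
  linarith
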